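/- Let f(z) = z² - c with c ∈ ℝ, c < 2 and c ≠ 0, and let a ∈ ℝ. Then not all iterated preimages of a under f are real; i.e., there exist n ≥ 1 and z ∈ ℂ \ ℝ with f^n(z) = a. -/

import Mathlib

/-- Backward orbit sequence: `sseq c a 0 = a`, `sseq c a (k+1) = √(sseq c a k + c)`. -/
private noncomputable def sseq (c a : ℝ) : ℕ → ℝ
  | 0 => a
  | k + 1 => Real.sqrt (sseq c a k + c)

private lemma iter_real (c : ℝ) : ∀ (m : ℕ) (x : ℝ),
    (fun w : ℂ => w ^ 2 - (c : ℂ))^[m] (x : ℂ) = (((fun t : ℝ => t ^ 2 - c)^[m] x : ℝ) : ℂ) := by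
  intro m
  induction m with
  | zero => intro x; simp
  | succ k ih =>
    intro x
    rw [Function.iterate_succ_apply, Function.iterate_succ_apply]
    have h : ((x : ℂ) ^ 2 - (c : ℂ)) = ((x ^ 2 - c : ℝ) : ℂ) := by push_cast; ring
    rw [h, ih]

private lemma key (c : ℝ) (hc2 : c < 2) (hc0 : c ≠ 0) (a : ℝ) :
    ∃ m : ℕ, ∃ x : ℝ, x + c < 0 ∧ (fun t : ℝ => t ^ 2 - c)^[m] x = a := by
  rcases lt_or_ge (a + c) 0 with h | h
  · exact ⟨0, a, h, rfl⟩
  rcases lt_or_gt_of_ne hc0 with hcneg | hcpos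
  · -- c < 0 : one backward step on the negative branch
    refine ⟨1, -Real.sqrt (a + c), ?_, ?_⟩
    · have := Real.sqrt_nonneg (a + c); linarith
    · simp only [Function.iterate_one]
      rw [neg_sq, Real.sq_sqrt h]; ring
  · -- 0 < c < 2
    have hy_nonneg : ∀ k, 0 ≤ sseq c a k + c := by
      intro k
      cases k with
      | zero => exact h
      | succ j =>
        have := Real.sqrt_nonneg (sseq c a j + c)
        simp only [sseq]; linarith
  -- each step is a genuine preimage
    have hiter : ∀ k, (fun t : ℝ => t ^ 2 - c)^[k] (sseq c a k) = a := by
      intro k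
      induction k with
      | zero => rfl
      | succ j ih =>
        rw [Function.iterate_succ_apply]
        have hg : sseq c a (j + 1) ^ 2 - c = sseq c a j := by
          simp only [sseq]
          rw [Real.sq_sqrt (hy_nonneg j)]; ring
        show (fun t : ℝ => t ^ 2 - c)^[j] (sseq c a (j + 1) ^ 2 - c) = a
        rw [hg]; exact ih
    have hδ : 0 < c * min 1 (2 - c) := by
      apply mul_pos hcpos
      rcases le_total 1 (2 - c) with hm | hm
      · rw [min_eq_left hm]; norm_num
      · rw [min_eq_right hm]; linarith
    -- eventually `sseq c a k + c > c^2`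
    have hex : ∃ k, c ^ 2 < sseq c a k + c := by
      by_contra hcon
      push_neg at hcon
      have grow : ∀ k : ℕ, (k : ℝ) * (c * min 1 (2 - c)) ≤ sseq c a k + c := by
        intro k
        induction k with
        | zero => simpa using hy_nonneg 0
        | succ j ih =>
          have hyj := hy_nonneg j
          have hyle := hcon j
          set y := sseq c a j + c with hy
          have ht : Real.sqrt y * Real.sqrt y = y := Real.mul_self_sqrt hyj
          have htn : 0 ≤ Real.sqrt y := Real.sqrt_nonneg y
          have htc : Real.sqrt y ≤ c := by
            have h1 : Real.sqrt y ≤ Real.sqrt (c ^ 2) := Real.sqrt_le_sqrt hyle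
            rwa [Real.sqrt_sq hcpos.le] at h1
          have hstep : y + c * min 1 (2 - c) ≤ Real.sqrt y + c := by
            rcases le_total 1 (2 - c) with hm | hm
            · rw [min_eq_left hm]
              nlinarith
            · rw [min_eq_right hm]
              nlinarith
          have : sseq c a (j + 1) + c = Real.sqrt y + c := by simp [sseq, hy]
          rw [this]
          push_cast
          nlinarith
      obtain ⟨k, hk⟩ := exists_nat_gt (c ^ 2 / (c * min 1 (2 - c)))
      have h1 : c ^ 2 < (k : ℝ) * (c * min 1 (2 - c)) := by
        rw [div_lt_iff₀ hδ] at hk; linarith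
      have h2 := grow k
      have h3 := hcon k
      linarith
    obtain ⟨k, hk⟩ := hex
    have hsq : c < Real.sqrt (sseq c a k + c) := by
      rw [Real.lt_sqrt hcpos.le]
      exact hk
    refine ⟨k + 1, -Real.sqrt (sseq c a k + c), by linarith, ?_⟩
    rw [Function.iterate_succ_apply]
    have hg : (-Real.sqrt (sseq c a k + c)) ^ 2 - c = sseq c a k := by
      rw [neg_sq, Real.sq_sqrt (hy_nonneg k)]; ring
    show (fun t : ℝ => t ^ 2 - c)^[k] ((-Real.sqrt (sseq c a k + c)) ^ 2 - c) = a
    rw [hg]; exact hiter k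

/-- For `f z = z² - c` with `c` real, `c < 2`, `c ≠ 0`, and any `a ∈ ℝ`, not all
iterated preimages of `a` under `f` are real: there exist `n ≥ 1` and a non-real
`z ∈ ℂ` with `f^n(z) = a`. -/
theorem real_case_c_lt_two
    (c : ℝ) (hc2 : c < 2) (hc0 : c ≠ 0) (a : ℝ) :
    ∃ n : ℕ, 1 ≤ n ∧ ∃ z : ℂ, z.im ≠ 0 ∧
      (fun w : ℂ => w ^ 2 - (c : ℂ))^[n] z = (a : ℂ) := by
  obtain ⟨m, x, hx, hfx⟩ := key c hc2 hc0 a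
  have hpos : 0 < -(x + c) := by linarith
  set r : ℝ := Real.sqrt (-(x + c)) with hr
  have hrpos : 0 < r := Real.sqrt_pos.mpr hpos
  refine ⟨m + 1, le_add_self, Complex.I * (r : ℂ), ?_, ?_⟩
  · have him : (Complex.I * (r : ℂ)).im = r := by
      rw [Complex.mul_im]; simp
    rw [him]; exact ne_of_gt hrpos
  · rw [Function.iterate_succ_apply]
    have hz2 : (Complex.I * (r : ℂ)) ^ 2 - (c : ℂ) = (x : ℂ) := by
      have h1 : r ^ 2 = -(x + c) := Real.sq_sqrt hpos.le
      have : (Complex.I * (r : ℂ)) ^ 2 = Complex.I ^ 2 * ((r : ℂ)) ^ 2 := by ring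
      rw [this, Complex.I_sq, ← Complex.ofReal_pow, h1]
      push_cast; ring
    show (fun w : ℂ => w ^ 2 - (c : ℂ))^[m] ((Complex.I * (r : ℂ)) ^ 2 - (c : ℂ)) = (a : ℂ)
    rw [hz2, iter_real, hfx]
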